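/- arXiv:1901.00139 — 2 statements merged into one kernel-verified Lean document; each statement's English description precedes it below -/
import Mathlib

section
/- Let C ≥ 1 and let f_1,…,f_C : ℝ^d → [0,∞) be measurable functions such that f := ∏_{c=1}^C f_c is Lebesgue-integrable. For each c let p_c : ℝ^d × ℝ^d → [0,∞) be measurable and satisfy the invariance equation ∫_{ℝ^d} f_c(x)² p_c(x,y) dx = f_c(y)² for (Lebesgue-)almost every y ∈ ℝ^d. Define g(x^{(1)},…,x^{(C)},y) := ∏_{c=1}^C [ f_c(x^{(c)})² · p_c(x^{(c)},y) / f_c(y) ] on the set where f_c(y) > 0 for all c (and 0 otherwise). Then for almost every y with f_c(y) > 0 for all c, the iterated integral ∫_{ℝ^{Cd}} g(x^{(1)},…,x^{(C)},y) dx^{(1)}⋯dx^{(C)} equals ∏_{c=1}^C f_c(y) = f(y); consequently g is integrable on ℝ^{(C+1)d} with total integral ∫_{ℝ^d} f(y) dy, i.e. the (C+1)d-dimensional density proportional to g admits the marginal density proportional to f in the coordinate y. -/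
open MeasureTheory

/-- **Proposition 1 of "Monte Carlo Fusion"** (extended fusion density).
Let `f := ∏_c f_c` be integrable, with each sub-posterior `f_c : ℝ^d → [0,∞)` measurable,
and let each `p_c` be a measurable nonnegative transition kernel satisfying the invariance
equation `∫ f_c(x)² p_c(x,y) dx = f_c(y)²` for a.e. `y`.  Define
`g(x⁽¹⁾,…,x⁽ᶜ⁾,y) := ∏_c f_c(x⁽ᶜ⁾)² p_c(x⁽ᶜ⁾,y)/f_c(y)` where all `f_c(y) > 0`
(and `0` otherwise).  Then for a.e. `y` with all `f_c(y) > 0` the iterated integral over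
`(x⁽¹⁾,…,x⁽ᶜ⁾)` of `g` equals `∏_c f_c(y) = f(y)`; consequently `g` is integrable on
`ℝ^{(C+1)d}` with total integral `∫ f(y) dy`, i.e. the extended density proportional to `g`
admits the marginal density proportional to `f` in the coordinate `y`. -/
theorem monte_carlo_fusion_extended_density
    {d C : ℕ} (hC : 1 ≤ C)
    (f : Fin C → EuclideanSpace ℝ (Fin d) → ℝ)
    (hf_meas : ∀ c, Measurable (f c))
    (hf_nonneg : ∀ c x, 0 ≤ f c x)
    (hf_int : Integrable (fun y : EuclideanSpace ℝ (Fin d) => ∏ c, f c y))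
    (p : Fin C → EuclideanSpace ℝ (Fin d) → EuclideanSpace ℝ (Fin d) → ℝ)
    (hp_meas : ∀ c, Measurable
      (fun q : EuclideanSpace ℝ (Fin d) × EuclideanSpace ℝ (Fin d) => p c q.1 q.2))
    (hp_nonneg : ∀ c x y, 0 ≤ p c x y)
    (hp_inv : ∀ c, ∀ᵐ y : EuclideanSpace ℝ (Fin d),
      ∫ x, (f c x) ^ 2 * p c x y = (f c y) ^ 2)
    (g : (Fin C → EuclideanSpace ℝ (Fin d)) × EuclideanSpace ℝ (Fin d) → ℝ)
    (hg : g = fun z =>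
      if ∀ c, 0 < f c z.2 then ∏ c, (f c (z.1 c)) ^ 2 * p c (z.1 c) z.2 / f c z.2 else 0) :
    (∀ᵐ y : EuclideanSpace ℝ (Fin d), (∀ c, 0 < f c y) →
        ∫ x : Fin C → EuclideanSpace ℝ (Fin d), g (x, y) = ∏ c, f c y) ∧
      Integrable g ∧
      ∫ z, g z = ∫ y : EuclideanSpace ℝ (Fin d), ∏ c, f c y := by
  -- nonnegativity of g
  have hg_nonneg : ∀ z, 0 ≤ g z := by
    intro z
    rw [hg]
    dsimp only
    split_ifs with h
    · exact Finset.prod_nonneg fun c _ => div_nonneg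
        (mul_nonneg (sq_nonneg _) (hp_nonneg c _ _)) (h c).le
    · exact le_rfl
  -- measurability of g
  have hg_meas : Measurable g := by
    rw [hg]
    apply Measurable.ite
    · have : {z : (Fin C → EuclideanSpace ℝ (Fin d)) × EuclideanSpace ℝ (Fin d) |
          ∀ c, 0 < f c z.2} = ⋂ c, {z | 0 < f c z.2} := by
        ext z; simp [Set.mem_iInter]
      rw [this]
      exact MeasurableSet.iInter fun c =>
        measurableSet_lt measurable_const ((hf_meas c).comp measurable_snd)
    · apply Finset.measurable_prod
      intro c _
      have h1 : Measurable fun z : (Fin C → EuclideanSpace ℝ (Fin d)) × EuclideanSpace ℝ (Fin d)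
          => z.1 c := (measurable_pi_apply c).comp measurable_fst
      have h2 : Measurable fun z : (Fin C → EuclideanSpace ℝ (Fin d)) × EuclideanSpace ℝ (Fin d)
          => p c (z.1 c) z.2 := (hp_meas c).comp (h1.prodMk measurable_snd)
      exact ((((hf_meas c).comp h1).pow_const 2).mul h2).div ((hf_meas c).comp measurable_snd)
    · exact measurable_const
  -- invariance for all c simultaneously, a.e. y
  have hkey : ∀ᵐ y : EuclideanSpace ℝ (Fin d), ∀ c, ∫ x, (f c x) ^ 2 * p c x y = (f c y) ^ 2 :=
    ae_all_iff.2 hp_inv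
  -- the main pointwise computation
  have hIy : ∀ᵐ y : EuclideanSpace ℝ (Fin d),
      ((∀ c, 0 < f c y) → ∀ c, Integrable (fun x => (f c x) ^ 2 * p c x y / f c y)) ∧
      ∫ x : Fin C → EuclideanSpace ℝ (Fin d), g (x, y) = ∏ c, f c y := by
    filter_upwards [hkey] with y hy
    by_cases hcond : ∀ c, 0 < f c y
    · have hint : ∀ c, Integrable (fun x => (f c x) ^ 2 * p c x y) := by
        intro c
        by_contra h
        have hyc := hy c
        rw [integral_undef h] at hyc
        exact (pow_pos (hcond c) 2).ne' hyc.symm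
      have hint' : ∀ c, Integrable (fun x => (f c x) ^ 2 * p c x y / f c y) :=
        fun c => (hint c).div_const _
      have hval : ∀ c, ∫ x, (f c x) ^ 2 * p c x y / f c y = f c y := by
        intro c
        rw [integral_div, hy c, sq, mul_div_assoc, div_self (hcond c).ne', mul_one]
      refine ⟨fun _ => hint', ?_⟩
      have : ∀ x : Fin C → EuclideanSpace ℝ (Fin d),
          g (x, y) = ∏ c, (f c (x c)) ^ 2 * p c (x c) y / f c y := by
        intro x; rw [hg]; exact if_pos hcond
      simp_rw [this]
      rw [integral_fintype_prod_volume_eq_prod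
        (fun c x => (f c x) ^ 2 * p c x y / f c y)]
      exact Finset.prod_congr rfl fun c _ => hval c
    · refine ⟨fun h => absurd h hcond, ?_⟩
      have h0 : ∀ x : Fin C → EuclideanSpace ℝ (Fin d), g (x, y) = 0 := by
        intro x; rw [hg]; exact if_neg hcond
      obtain ⟨c, hc⟩ := not_forall.1 hcond
      have hc0 : f c y = 0 := le_antisymm (not_lt.1 hc) (hf_nonneg c y)
      simp_rw [h0, integral_zero]
      exact (Finset.prod_eq_zero (Finset.mem_univ c) hc0).symm
  -- Integrability of g
  have hInt : Integrable g := by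
    rw [MeasureTheory.Measure.volume_eq_prod]
    refine (integrable_prod_iff' ?_).2 ⟨?_, ?_⟩
    · rw [← MeasureTheory.Measure.volume_eq_prod]; exact hg_meas.aestronglyMeasurable
    · filter_upwards [hIy] with y hy
      by_cases hcond : ∀ c, 0 < f c y
      · have : (fun x : Fin C → EuclideanSpace ℝ (Fin d) => g (x, y)) =
            fun x => ∏ c, (f c (x c)) ^ 2 * p c (x c) y / f c y := by
          funext x; rw [hg]; exact if_pos hcond
        rw [this]
        exact Integrable.fintype_prod (hy.1 hcond)
      · have : (fun x : Fin C → EuclideanSpace ℝ (Fin d) => g (x, y)) = fun _ => 0 := by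
          funext x; rw [hg]; exact if_neg hcond
        rw [this]
        exact integrable_zero _ _ _
    · apply hf_int.congr
      filter_upwards [hIy] with y hy
      have : (fun x : Fin C → EuclideanSpace ℝ (Fin d) => ‖g (x, y)‖) =
          fun x => g (x, y) := funext fun x => Real.norm_of_nonneg (hg_nonneg _)
      rw [this, hy.2]
  refine ⟨?_, hInt, ?_⟩
  · filter_upwards [hIy] with y hy _
    exact hy.2
  · have hInt' : Integrable g
        ((volume : Measure (Fin C → EuclideanSpace ℝ (Fin d))).prod volume) := by
      rwa [← MeasureTheory.Measure.volume_eq_prod]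
    rw [MeasureTheory.Measure.volume_eq_prod, integral_prod_symm g hInt']
    exact integral_congr_ae (hIy.mono fun y hy => hy.2)
end

section
/- Let C ≥ 1, T > 0, let f_1,…,f_C : ℝ^d → (0,∞) be functions, and let p_1,…,p_C, q_1,…,q_C : ℝ^d × ℝ^d → ℝ be functions such that for each c and all x, y: p_c(x,y) = (f_c(y)/f_c(x)) · (2πT)^{-d/2} · exp(−‖y−x‖²/(2T)) · q_c(x,y). Define g(x^{(1)},…,x^{(C)},y) := ∏_{c=1}^C [ f_c(x^{(c)})² · p_c(x^{(c)},y) / f_c(y) ] and h(x^{(1)},…,x^{(C)},y) := ∏_{c=1}^C f_c(x^{(c)}) · exp(−C‖y−x̄‖²/(2T)), where x̄ := C^{-1}∑_c x^{(c)}. Then for all x^{(1)},…,x^{(C)}, y ∈ ℝ^d: g(x^{(1)},…,x^{(C)},y) / h(x^{(1)},…,x^{(C)},y) = (2πT)^{-Cd/2} · exp(−Cσ²/(2T)) · ∏_{c=1}^C q_c(x^{(c)},y), where σ² := C^{-1} ∑_{c=1}^C ‖x^{(c)} − x̄‖². -/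
open Real

/-- **Algebraic content of Proposition 2 of "Monte Carlo Fusion"** (Brownian bridge fusion
rejection sampler): if each transition density `p_c` admits the Dacunha–Castelle
representation `p_c(x,y) = (f_c(y)/f_c(x)) (2πT)^{-d/2} exp(−‖y−x‖²/(2T)) q_c(x,y)`,
then the ratio of the extended fusion target
`g(x⁽¹⁾,…,x⁽ᶜ⁾,y) = ∏_c f_c(x⁽ᶜ⁾)² p_c(x⁽ᶜ⁾,y)/f_c(y)` to the proposal
`h(x⁽¹⁾,…,x⁽ᶜ⁾,y) = (∏_c f_c(x⁽ᶜ⁾)) exp(−C‖y−x̄‖²/(2T))` equals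
`(2πT)^{-Cd/2} · exp(−Cσ²/(2T)) · ∏_c q_c(x⁽ᶜ⁾,y)`, where `x̄` is the average of the
`x⁽ᶜ⁾` and `σ² = C⁻¹ ∑_c ‖x⁽ᶜ⁾ − x̄‖²`. -/
theorem monte_carlo_fusion_brownian_ratio
    {d C : ℕ} (hC : 1 ≤ C) (T : ℝ) (hT : 0 < T)
    (f : Fin C → EuclideanSpace ℝ (Fin d) → ℝ)
    (hf : ∀ c x, 0 < f c x)
    (p q : Fin C → EuclideanSpace ℝ (Fin d) → EuclideanSpace ℝ (Fin d) → ℝ)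
    (hpq : ∀ c (x y : EuclideanSpace ℝ (Fin d)),
      p c x y = (f c y / f c x) * (2 * π * T) ^ (-(d : ℝ) / 2) *
        Real.exp (-‖y - x‖ ^ 2 / (2 * T)) * q c x y)
    (x : Fin C → EuclideanSpace ℝ (Fin d)) (y : EuclideanSpace ℝ (Fin d)) :
    (∏ c, (f c (x c)) ^ 2 * p c (x c) y / f c y) /
      ((∏ c, f c (x c)) *
        Real.exp (-((C : ℝ) * ‖y - (C : ℝ)⁻¹ • ∑ c', x c'‖ ^ 2) / (2 * T))) =
    (2 * π * T) ^ (-((C : ℝ) * d) / 2) *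
      Real.exp (-((C : ℝ) * ((C : ℝ)⁻¹ * ∑ c, ‖x c - (C : ℝ)⁻¹ • ∑ c', x c'‖ ^ 2)) / (2 * T)) *
      ∏ c, q c (x c) y := by
  have hC0 : (C : ℝ) ≠ 0 := Nat.cast_ne_zero.mpr (by omega)
  have h2πT : (0:ℝ) < 2 * π * T := by positivity
  set m : EuclideanSpace ℝ (Fin d) := (C : ℝ)⁻¹ • ∑ c', x c' with hm
  -- variance decomposition
  have hsum0 : ∑ c : Fin C, (m - x c) = 0 := by
    rw [Finset.sum_sub_distrib, Finset.sum_const, Finset.card_univ, Fintype.card_fin,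
      hm, ← Nat.cast_smul_eq_nsmul ℝ, smul_smul, mul_inv_cancel₀ hC0, one_smul, sub_self]
  have key : ∑ c, ‖y - x c‖ ^ 2 = (C : ℝ) * ‖y - m‖ ^ 2 + ∑ c, ‖x c - m‖ ^ 2 := by
    have h1 : ∀ c : Fin C, ‖y - x c‖ ^ 2 =
        ‖y - m‖ ^ 2 + 2 * inner ℝ (y - m) (m - x c) + ‖m - x c‖ ^ 2 := by
      intro c
      have : y - x c = (y - m) + (m - x c) := by abel
      rw [this, @norm_add_sq_real]
    simp only [h1]
    rw [Finset.sum_add_distrib, Finset.sum_add_distrib, Finset.sum_const,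
      Finset.card_univ, Fintype.card_fin, ← Finset.mul_sum, ← inner_sum, hsum0,
      inner_zero_right]
    have : ∀ c : Fin C, ‖m - x c‖ ^ 2 = ‖x c - m‖ ^ 2 := fun c => by rw [norm_sub_rev]
    simp only [this, nsmul_eq_mul]
    ring
  -- rewrite the numerator product
  have hprod : (∏ c, (f c (x c)) ^ 2 * p c (x c) y / f c y)
      = (∏ c, f c (x c)) * ((2 * π * T) ^ (-(d : ℝ) / 2)) ^ (C : ℕ) *
        Real.exp (-(∑ c, ‖y - x c‖ ^ 2) / (2 * T)) * ∏ c, q c (x c) y := by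
    have hterm : ∀ c : Fin C, (f c (x c)) ^ 2 * p c (x c) y / f c y
        = f c (x c) * ((2 * π * T) ^ (-(d : ℝ) / 2) *
          (Real.exp (-‖y - x c‖ ^ 2 / (2 * T)) * q c (x c) y)) := by
      intro c
      rw [hpq]
      field_simp [(hf c (x c)).ne', (hf c y).ne']
    rw [Finset.prod_congr rfl fun c _ => hterm c]
    rw [Finset.prod_mul_distrib, Finset.prod_mul_distrib, Finset.prod_mul_distrib,
      Finset.prod_const, Finset.card_univ, Fintype.card_fin, ← Real.exp_sum]
    have hsum : ∑ c, -‖y - x c‖ ^ 2 / (2 * T) = (-∑ c, ‖y - x c‖ ^ 2) / (2 * T) := by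
      rw [← Finset.sum_div, ← Finset.sum_neg_distrib]
    rw [hsum]; ring
  have hfp : (∏ c, f c (x c)) ≠ 0 :=
    Finset.prod_ne_zero_iff.mpr fun c _ => (hf c (x c)).ne'
  have hpow : ((2 * π * T) ^ (-(d : ℝ) / 2)) ^ (C : ℕ)
      = (2 * π * T) ^ (-((C : ℝ) * d) / 2) := by
    rw [← Real.rpow_natCast ((2 * π * T) ^ (-(d : ℝ) / 2)) C,
      ← Real.rpow_mul h2πT.le]
    congr 1
    ring
  rw [hprod, hpow]
  have hAB : Real.exp ((-∑ c, ‖y - x c‖ ^ 2) / (2 * T))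
      = Real.exp (-((C : ℝ) * ((C : ℝ)⁻¹ * ∑ c, ‖x c - m‖ ^ 2)) / (2 * T)) *
        Real.exp (-((C : ℝ) * ‖y - m‖ ^ 2) / (2 * T)) := by
    rw [← Real.exp_add]
    congr 1
    rw [key]
    field_simp
    ring
  rw [hAB]
  field_simp
end
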